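/- If A and all formulas of Γ contain no occurrence of ∀ and A has the form ¬B, then Γ ⊢_NK ¬B if and only if Γ ⊢_NJ ¬B. -/
import Mathlib


/-- First-order terms: variables (de Bruijn style indices for bound variables
are merged with free variable indices) and function symbols with arguments. -/
inductive Term where
  | var : ℕ → Term
  | fn : ℕ → (ℕ → Term) → Term

/-- Lift (shift by one) all variables ≥ k. -/
def Term.lift (k : ℕ) : Term → Term
  | .var n => .var (if n < k then n else n + 1)
  | .fn f a => .fn f (fun i => (a i).lift k)

/-- Capture-avoiding substitution of the term `s` for variable `k` (de Bruijn). -/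
def Term.subst (k : ℕ) (s : Term) : Term → Term
  | .var n => if n < k then .var n else if n = k then s else .var (n - 1)
  | .fn f a => .fn f (fun i => Term.subst k s (a i))

/-- Free variables of a term. -/
def Term.fv : Term → Set ℕ
  | .var n => {n}
  | .fn _ a => ⋃ i, (a i).fv

/-- First-order formulas with primitive negation, de Bruijn binders. -/
inductive Formula where
  | pred : ℕ → (ℕ → Term) → Formula
  | bot : Formula
  | top : Formula
  | neg : Formula → Formula
  | conj : Formula → Formula → Formula
  | disj : Formula → Formula → Formula
  | impl : Formula → Formula → Formula
  | all : Formula → Formula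
  | ex : Formula → Formula

def Formula.lift (k : ℕ) : Formula → Formula
  | .pred r a => .pred r (fun i => (a i).lift k)
  | .bot => .bot
  | .top => .top
  | .neg A => .neg (A.lift k)
  | .conj A B => .conj (A.lift k) (B.lift k)
  | .disj A B => .disj (A.lift k) (B.lift k)
  | .impl A B => .impl (A.lift k) (B.lift k)
  | .all A => .all (A.lift (k + 1))
  | .ex A => .ex (A.lift (k + 1))

/-- Capture-avoiding substitution of term `s` for variable `k` in a formula. -/
def Formula.subst (k : ℕ) (s : Term) : Formula → Formula
  | .pred r a => .pred r (fun i => Term.subst k s (a i))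
  | .bot => .bot
  | .top => .top
  | .neg A => .neg (A.subst k s)
  | .conj A B => .conj (A.subst k s) (B.subst k s)
  | .disj A B => .disj (A.subst k s) (B.subst k s)
  | .impl A B => .impl (A.subst k s) (B.subst k s)
  | .all A => .all (A.subst (k + 1) (s.lift 0))
  | .ex A => .ex (A.subst (k + 1) (s.lift 0))

/-- Free variables of a formula. -/
def Formula.fv : Formula → Set ℕ
  | .pred _ a => ⋃ i, (a i).fv
  | .bot => ∅
  | .top => ∅
  | .neg A => A.fv
  | .conj A B => A.fv ∪ B.fv
  | .disj A B => A.fv ∪ B.fv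
  | .impl A B => A.fv ∪ B.fv
  | .all A => {n | n + 1 ∈ A.fv}
  | .ex A => {n | n + 1 ∈ A.fv}

/-- Object-level biconditional, as a defined connective. -/
def Formula.fIff (A B : Formula) : Formula := .conj (.impl A B) (.impl B A)

/-- `A` contains no occurrence of the universal quantifier ∀. -/
def Formula.forallFree : Formula → Prop
  | .pred _ _ => True
  | .bot => True
  | .top => True
  | .neg A => A.forallFree
  | .conj A B => A.forallFree ∧ B.forallFree
  | .disj A B => A.forallFree ∧ B.forallFree
  | .impl A B => A.forallFree ∧ B.forallFree
  | .all _ => False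
  | .ex A => A.forallFree

/-- `A` contains no occurrence of implication →. -/
def Formula.impFree : Formula → Prop
  | .pred _ _ => True
  | .bot => True
  | .top => True
  | .neg A => A.impFree
  | .conj A B => A.impFree ∧ B.impFree
  | .disj A B => A.impFree ∧ B.impFree
  | .impl _ _ => False
  | .all A => A.impFree
  | .ex A => A.impFree

/-- The minimal translation (·)^m. -/
def Formula.mtr : Formula → Formula
  | .pred r a => .pred r a
  | .bot => .bot
  | .top => .top
  | .neg A => .neg A.mtr
  | .conj A B => .conj A.mtr B.mtr
  | .disj A B => .disj A.mtr B.mtr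
  | .impl A B => .disj (.neg A.mtr) B.mtr
  | .all A => .neg (.ex (.neg A.mtr))
  | .ex A => .ex A.mtr

/-- The intuitionistic translation (·)^j. -/
def Formula.jtr : Formula → Formula
  | .pred r a => .pred r a
  | .bot => .bot
  | .top => .top
  | .neg A => .neg A.jtr
  | .conj A B => .conj A.jtr B.jtr
  | .disj A B => .disj A.jtr B.jtr
  | .impl A B => .impl A.jtr B.jtr
  | .all A => .neg (.ex (.neg A.jtr))
  | .ex A => .ex A.jtr

/-- Negative formulas: built from negated atoms, ⊥, ⊤ using only ¬, ∧, →, ∀. -/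
inductive Formula.Negative : Formula → Prop where
  | negAtom : ∀ r a, Formula.Negative (.neg (.pred r a))
  | bot : Formula.Negative .bot
  | top : Formula.Negative .top
  | neg : ∀ {A}, Formula.Negative A → Formula.Negative (.neg A)
  | conj : ∀ {A B}, Formula.Negative A → Formula.Negative B → Formula.Negative (.conj A B)
  | impl : ∀ {A B}, Formula.Negative A → Formula.Negative B → Formula.Negative (.impl A B)
  | all : ∀ {A}, Formula.Negative A → Formula.Negative (.all A)

/-- Natural deduction derivability; the flags `efq`, `raa` tell whether the
ex falso quodlibet and reductio ad absurdum rules are available.  `Deriv efq raa Γ A`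
means `A` is derivable with undischarged assumptions among `Γ`. -/
inductive Deriv (efq raa : Bool) : Set Formula → Formula → Prop where
  | hyp : ∀ {Γ A}, A ∈ Γ → Deriv efq raa Γ A
  | topI : ∀ {Γ}, Deriv efq raa Γ .top
  | negI : ∀ {Γ A}, Deriv efq raa (insert A Γ) .bot → Deriv efq raa Γ (.neg A)
  | negE : ∀ {Γ A}, Deriv efq raa Γ (.neg A) → Deriv efq raa Γ A → Deriv efq raa Γ .bot
  | conjI : ∀ {Γ A B}, Deriv efq raa Γ A → Deriv efq raa Γ B → Deriv efq raa Γ (.conj A B)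
  | conjE1 : ∀ {Γ A B}, Deriv efq raa Γ (.conj A B) → Deriv efq raa Γ A
  | conjE2 : ∀ {Γ A B}, Deriv efq raa Γ (.conj A B) → Deriv efq raa Γ B
  | disjI1 : ∀ {Γ A B}, Deriv efq raa Γ A → Deriv efq raa Γ (.disj A B)
  | disjI2 : ∀ {Γ A B}, Deriv efq raa Γ B → Deriv efq raa Γ (.disj A B)
  | disjE : ∀ {Γ A B C}, Deriv efq raa Γ (.disj A B) → Deriv efq raa (insert A Γ) C →
      Deriv efq raa (insert B Γ) C → Deriv efq raa Γ C
  | implI : ∀ {Γ A B}, Deriv efq raa (insert A Γ) B → Deriv efq raa Γ (.impl A B)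
  | implE : ∀ {Γ A B}, Deriv efq raa Γ (.impl A B) → Deriv efq raa Γ A → Deriv efq raa Γ B
  | allI : ∀ {Γ A}, Deriv efq raa (Formula.lift 0 '' Γ) A → Deriv efq raa Γ (.all A)
  | allE : ∀ {Γ A} (t : Term), Deriv efq raa Γ (.all A) → Deriv efq raa Γ (A.subst 0 t)
  | exI : ∀ {Γ A} (t : Term), Deriv efq raa Γ (A.subst 0 t) → Deriv efq raa Γ (.ex A)
  | exE : ∀ {Γ A C}, Deriv efq raa Γ (.ex A) →
      Deriv efq raa (insert A (Formula.lift 0 '' Γ)) (C.lift 0) → Deriv efq raa Γ C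
  | efqR : ∀ {Γ A}, efq = true → Deriv efq raa Γ .bot → Deriv efq raa Γ A
  | raaR : ∀ {Γ A}, raa = true → Deriv efq raa (insert (.neg A) Γ) .bot → Deriv efq raa Γ A

/-- Minimal natural deduction. -/
def NM : Set Formula → Formula → Prop := Deriv false false
/-- Intuitionistic natural deduction. -/
def NJ : Set Formula → Formula → Prop := Deriv true false
/-- Classical natural deduction (minimal + reductio ad absurdum). -/
def NK : Set Formula → Formula → Prop := Deriv false true

theorem Deriv.weaken {e r : Bool} {Γ Γ' : Set Formula} {A : Formula}
    (h : Deriv e r Γ A) (hs : Γ ⊆ Γ') : Deriv e r Γ' A := by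
  induction h generalizing Γ' with
  | hyp hA => exact .hyp (hs hA)
  | topI => exact .topI
  | negI _ ih => exact .negI (ih (Set.insert_subset_insert hs))
  | negE _ _ ih1 ih2 => exact .negE (ih1 hs) (ih2 hs)
  | conjI _ _ ih1 ih2 => exact .conjI (ih1 hs) (ih2 hs)
  | conjE1 _ ih => exact .conjE1 (ih hs)
  | conjE2 _ ih => exact .conjE2 (ih hs)
  | disjI1 _ ih => exact .disjI1 (ih hs)
  | disjI2 _ ih => exact .disjI2 (ih hs)
  | disjE _ _ _ ih ih1 ih2 =>
      exact .disjE (ih hs) (ih1 (Set.insert_subset_insert hs))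
        (ih2 (Set.insert_subset_insert hs))
  | implI _ ih => exact .implI (ih (Set.insert_subset_insert hs))
  | implE _ _ ih1 ih2 => exact .implE (ih1 hs) (ih2 hs)
  | allI _ ih => exact .allI (ih (Set.image_mono hs))
  | allE t _ ih => exact .allE t (ih hs)
  | exI t _ ih => exact .exI t (ih hs)
  | exE _ _ ih1 ih2 =>
      exact .exE (ih1 hs) (ih2 (Set.insert_subset_insert (Set.image_mono hs)))
  | efqR he _ ih => exact .efqR he (ih hs)
  | raaR hr _ ih => exact .raaR hr (ih (Set.insert_subset_insert hs))

/-- Double negation introduction. -/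
theorem Deriv.dni {e r : Bool} {Γ : Set Formula} {A : Formula}
    (h : Deriv e r Γ A) : Deriv e r Γ (.neg (.neg A)) :=
  .negI (.negE (.hyp (Set.mem_insert _ _)) (h.weaken (Set.subset_insert _ _)))

/-- Triple negation elimination. -/
theorem Deriv.tne {e r : Bool} {Γ : Set Formula} {A : Formula}
    (h : Deriv e r Γ (.neg (.neg (.neg A)))) : Deriv e r Γ (.neg A) :=
  .negI (.negE (h.weaken (Set.subset_insert _ _))
    (Deriv.dni (.hyp (Set.mem_insert _ _))))

theorem Deriv.botOfDnbot {e r : Bool} {Γ : Set Formula}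
    (h : Deriv e r Γ (.neg (.neg .bot))) : Deriv e r Γ .bot :=
  .negE h (.negI (.hyp (Set.mem_insert _ _)))

theorem Formula.jtr_lift (k : ℕ) (A : Formula) :
    (A.lift k).jtr = A.jtr.lift k := by
  induction A generalizing k <;>
    simp_all [Formula.jtr, Formula.lift]

theorem Formula.jtr_subst (k : ℕ) (s : Term) (A : Formula) :
    (A.subst k s).jtr = A.jtr.subst k s := by
  induction A generalizing k s <;>
    simp_all [Formula.jtr, Formula.subst]

theorem Formula.jtr_fix {A : Formula} (h : A.forallFree) : A.jtr = A := by
  induction A <;> simp_all [Formula.jtr, Formula.forallFree]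

theorem jtr_image_lift (Γ : Set Formula) :
    Formula.jtr '' (Formula.lift 0 '' Γ) = Formula.lift 0 '' (Formula.jtr '' Γ) := by
  rw [Set.image_image, Set.image_image]
  exact Set.image_congr fun A _ => Formula.jtr_lift 0 A

/-- Glivenko-style double negation translation: any derivation (even classical)
yields an intuitionistic derivation of the double negation of the `jtr`
translation. -/
theorem Deriv.toNJ {e r : Bool} {Γ : Set Formula} {A : Formula}
    (h : Deriv e r Γ A) :
    Deriv true false (Formula.jtr '' Γ) (.neg (.neg A.jtr)) := by
  induction h with
  | hyp hA => exact Deriv.dni (.hyp ⟨_, hA, rfl⟩)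
  | topI => exact Deriv.dni .topI
  | @negI Γ A _ ih =>
      rw [Set.image_insert_eq] at ih
      exact Deriv.dni (.negI (Deriv.botOfDnbot ih))
  | negE _ _ ih1 ih2 => exact Deriv.dni (.negE ih2 (Deriv.tne ih1))
  | @conjI Γ A B _ _ ih1 ih2 =>
      -- goal: ¬¬(A.jtr ∧ B.jtr)
      refine .negI (.negE (ih1.weaken (Set.subset_insert _ _)) (.negI ?_))
      -- ctx: A.jtr, ¬(A∧B), Γ' ⊢ ⊥
      refine .negE (ih2.weaken (fun x hx => Set.subset_insert _ _
        (Set.subset_insert _ _ hx))) (.negI ?_)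
      -- ctx: B.jtr, A.jtr, ¬(A∧B) ⊢ ⊥
      exact .negE
        (.hyp (Set.mem_insert_iff.mpr (Or.inr (Set.mem_insert_iff.mpr
          (Or.inr (Set.mem_insert _ _))))))
        (.conjI (.hyp (Set.mem_insert_iff.mpr (Or.inr (Set.mem_insert _ _))))
          (.hyp (Set.mem_insert _ _)))
  | conjE1 _ ih =>
      refine .negI (.negE (ih.weaken (Set.subset_insert _ _)) (.negI ?_))
      exact .negE (.hyp (Set.mem_insert_iff.mpr (Or.inr (Set.mem_insert _ _))))
        (.conjE1 (.hyp (Set.mem_insert _ _)))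
  | conjE2 _ ih =>
      refine .negI (.negE (ih.weaken (Set.subset_insert _ _)) (.negI ?_))
      exact .negE (.hyp (Set.mem_insert_iff.mpr (Or.inr (Set.mem_insert _ _))))
        (.conjE2 (.hyp (Set.mem_insert _ _)))
  | disjI1 _ ih =>
      refine .negI (.negE (ih.weaken (Set.subset_insert _ _)) (.negI ?_))
      exact .negE (.hyp (Set.mem_insert_iff.mpr (Or.inr (Set.mem_insert _ _))))
        (.disjI1 (.hyp (Set.mem_insert _ _)))
  | disjI2 _ ih =>
      refine .negI (.negE (ih.weaken (Set.subset_insert _ _)) (.negI ?_))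
      exact .negE (.hyp (Set.mem_insert_iff.mpr (Or.inr (Set.mem_insert _ _))))
        (.disjI2 (.hyp (Set.mem_insert _ _)))
  | @disjE Γ A B C _ _ _ ih ih1 ih2 =>
      rw [Set.image_insert_eq] at ih1 ih2
      -- goal: Γ' ⊢ ¬¬C.jtr
      refine .negI (.negE (ih.weaken (Set.subset_insert _ _)) (.negI ?_))
      -- ctx2: A∨B, ¬C, Γ' ⊢ ⊥
      refine .disjE (.hyp (Set.mem_insert _ _)) ?_ ?_
      · refine .negE (ih1.weaken (Set.insert_subset_insert (fun x hx =>
          Set.subset_insert _ _ (Set.subset_insert _ _ hx)))) ?_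
        exact .hyp (Set.mem_insert_iff.mpr (Or.inr (Set.mem_insert_iff.mpr
          (Or.inr (Set.mem_insert _ _)))))
      · refine .negE (ih2.weaken (Set.insert_subset_insert (fun x hx =>
          Set.subset_insert _ _ (Set.subset_insert _ _ hx)))) ?_
        exact .hyp (Set.mem_insert_iff.mpr (Or.inr (Set.mem_insert_iff.mpr
          (Or.inr (Set.mem_insert _ _)))))
  | @implI Γ A B _ ih =>
      rw [Set.image_insert_eq] at ih
      -- ih : insert A.jtr Γ' ⊢ ¬¬B.jtr; goal ¬¬(A.jtr → B.jtr)
      refine .negI ?_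
      -- ctx1: h = ¬(A→B), Γ'
      have hbot : Deriv true false
          (insert A.jtr (insert (.neg (.impl A.jtr B.jtr)) (Formula.jtr '' Γ)))
          .bot := by
        refine .negE (ih.weaken (Set.insert_subset_insert (Set.subset_insert _ _)))
          (.negI ?_)
        -- ctx: B, A, ¬(A→B) ⊢ ⊥
        refine .negE (.hyp (Set.mem_insert_iff.mpr (Or.inr (Set.mem_insert_iff.mpr
          (Or.inr (Set.mem_insert _ _)))))) (.implI (.hyp ?_))
        exact Set.mem_insert_iff.mpr (Or.inr (Set.mem_insert _ _))
      exact .negE (.hyp (Set.mem_insert _ _)) (.implI (.efqR rfl hbot))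
  | @implE Γ A B _ _ ih1 ih2 =>
      -- goal ¬¬B.jtr
      refine .negI (.negE (ih1.weaken (Set.subset_insert _ _)) (.negI ?_))
      -- ctx: A→B, ¬B, Γ' ⊢ ⊥
      refine .negE (ih2.weaken (fun x hx => Set.subset_insert _ _
        (Set.subset_insert _ _ hx))) (.negI ?_)
      -- ctx: A, A→B, ¬B ⊢ ⊥
      refine .negE (.hyp (Set.mem_insert_iff.mpr (Or.inr (Set.mem_insert_iff.mpr
        (Or.inr (Set.mem_insert _ _)))))) ?_
      exact .implE (.hyp (Set.mem_insert_iff.mpr (Or.inr (Set.mem_insert _ _))))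
        (.hyp (Set.mem_insert _ _))
  | @allI Γ A _ ih =>
      rw [jtr_image_lift] at ih
      -- ih : lift '' Γ' ⊢ ¬¬A.jtr; goal ¬¬¬(∃¬A.jtr)
      refine Deriv.dni (.negI ?_)
      -- ctx1: ∃¬A.jtr, Γ' ⊢ ⊥
      refine .exE (A := .neg A.jtr) (C := .bot) (.hyp (Set.mem_insert _ _)) ?_
      -- ctx: ¬A.jtr, lift '' ctx1 ⊢ ⊥
      refine .negE (ih.weaken (fun x hx => Set.subset_insert _ _
        (Set.image_mono (Set.subset_insert _ _) hx))) (.hyp (Set.mem_insert _ _))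
  | @allE Γ A t _ ih =>
      rw [Formula.jtr_subst]
      have hne : Deriv true false (Formula.jtr '' Γ) (.neg (.ex (.neg A.jtr))) :=
        Deriv.tne ih
      refine .negI (.negE (hne.weaken (Set.subset_insert _ _)) ?_)
      exact .exI (A := .neg A.jtr) t (.hyp (Set.mem_insert _ _))
  | @exI Γ A t _ ih =>
      rw [Formula.jtr_subst] at ih
      refine .negI (.negE (ih.weaken (Set.subset_insert _ _)) (.negI ?_))
      -- ctx: A.jtr.subst 0 t, ¬∃A.jtr ⊢ ⊥
      refine .negE (.hyp (Set.mem_insert_iff.mpr (Or.inr (Set.mem_insert _ _)))) ?_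
      exact .exI t (.hyp (Set.mem_insert _ _))
  | @exE Γ A C _ _ ih1 ih2 =>
      rw [Set.image_insert_eq, jtr_image_lift, Formula.jtr_lift] at ih2
      -- ih2 : insert A.jtr (lift '' Γ') ⊢ ¬¬(C.jtr.lift 0)
      refine .negI (.negE (ih1.weaken (Set.subset_insert _ _)) (.negI ?_))
      -- ctx2: ∃A.jtr, ¬C.jtr, Γ' ⊢ ⊥
      refine .exE (A := A.jtr) (C := .bot) (.hyp (Set.mem_insert _ _)) ?_
      -- ctx: A.jtr, lift '' ctx2 ⊢ ⊥
      refine .negE (ih2.weaken (Set.insert_subset_insert (Set.image_mono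
        (fun x hx => Set.subset_insert _ _ (Set.subset_insert _ _ hx))))) ?_
      -- need ¬(C.jtr.lift 0) = lift (¬C.jtr) from ctx
      refine .hyp (Set.mem_insert_iff.mpr (Or.inr ?_))
      exact ⟨.neg C.jtr, Set.subset_insert _ _ (Set.mem_insert _ _), rfl⟩
  | efqR _ _ ih => exact Deriv.dni (.efqR rfl (Deriv.botOfDnbot ih))
  | @raaR Γ A _ _ ih =>
      rw [Set.image_insert_eq] at ih
      exact .negI (Deriv.botOfDnbot ih)

/-- Intuitionistic derivability implies classical derivability. -/
theorem Deriv.njToNk {Γ : Set Formula} {A : Formula}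
    (h : Deriv true false Γ A) : Deriv false true Γ A := by
  induction h with
  | hyp hA => exact .hyp hA
  | topI => exact .topI
  | negI _ ih => exact .negI ih
  | negE _ _ ih1 ih2 => exact .negE ih1 ih2
  | conjI _ _ ih1 ih2 => exact .conjI ih1 ih2
  | conjE1 _ ih => exact .conjE1 ih
  | conjE2 _ ih => exact .conjE2 ih
  | disjI1 _ ih => exact .disjI1 ih
  | disjI2 _ ih => exact .disjI2 ih
  | disjE _ _ _ ih ih1 ih2 => exact .disjE ih ih1 ih2
  | implI _ ih => exact .implI ih
  | implE _ _ ih1 ih2 => exact .implE ih1 ih2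
  | allI _ ih => exact .allI ih
  | allE t _ ih => exact .allE t ih
  | exI t _ ih => exact .exI t ih
  | exE _ _ ih1 ih2 => exact .exE ih1 ih2
  | efqR _ _ ih => exact .raaR rfl (ih.weaken (Set.subset_insert _ _))
  | raaR hr _ _ => exact absurd hr (by simp)

/-- For negated formulas in the ∀-free fragment, classical and intuitionistic
derivability coincide. -/
theorem glivenko_intuitionistic_neg (Γ : Set Formula) (B : Formula)
    (hB : (Formula.neg B).forallFree)
    (hΓ : ∀ C ∈ Γ, C.forallFree) :
    NK Γ (.neg B) ↔ NJ Γ (.neg B) := by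
  have himg : Formula.jtr '' Γ = Γ := by
    ext x
    constructor
    · rintro ⟨y, hy, rfl⟩
      rw [Formula.jtr_fix (hΓ y hy)]; exact hy
    · intro hx
      exact ⟨x, hx, Formula.jtr_fix (hΓ x hx)⟩
  constructor
  · intro h
    have := h.toNJ
    rw [himg] at this
    have hfix : (Formula.neg B).jtr = Formula.neg B := Formula.jtr_fix hB
    rw [hfix] at this
    exact Deriv.tne this
  · intro h
    exact h.njToNk
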